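/- If m, f, g are non-negative integrable functions on ℝ satisfying m((r+s)/2) ≥ √(f(r)·g(s)) for all r, s ∈ ℝ, then ∫ℝ m ≥ √(∫ℝ f · ∫ℝ g). -/

import Mathlib

open MeasureTheory Set Filter ENNReal

private lemma tendsto_exists_le_add {u : ℕ → ℝ≥0∞} {L : ℝ≥0∞} (hL : L ≠ ∞)
    (h : Tendsto u atTop (nhds L)) {ε : ℝ≥0∞} (hε : ε ≠ 0) : ∃ n, L ≤ u n + ε := by
  rcases eq_or_ne L 0 with h0 | h0
  · exact ⟨0, by simp [h0]⟩
  · have h1 : L - ε < L := ENNReal.sub_lt_self hL h0 hε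
    obtain ⟨n, hn⟩ := (h.eventually (Ioi_mem_nhds h1)).exists
    exact ⟨n, tsub_le_iff_right.mp (le_of_lt hn)⟩

private lemma cut_Iic (A : Set ℝ) (hne : A.Nonempty) (hfin : volume A ≠ ∞)
    {ε : ℝ≥0∞} (hε : ε ≠ 0) : ∃ a ∈ A, volume A ≤ volume (A ∩ Iic a) + ε := by
  obtain ⟨x, hx⟩ : ∃ x : ℝ, volume A ≤ volume (A ∩ Iic x) + ε := by
    have hmono : Monotone (fun n : ℕ => A ∩ Iic (n : ℝ)) := fun i j hij =>
      inter_subset_inter_right _ (Iic_subset_Iic.2 (by exact_mod_cast hij))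
    have hU : ⋃ n : ℕ, A ∩ Iic (n : ℝ) = A := by
      ext y; simp only [mem_iUnion, mem_inter_iff, mem_Iic]
      exact ⟨fun ⟨n, h1, _⟩ => h1, fun hy => (exists_nat_ge y).imp fun n hn => ⟨hy, hn⟩⟩
    have ht := tendsto_measure_iUnion_atTop (μ := volume) hmono
    rw [hU] at ht
    obtain ⟨n, hn⟩ := tendsto_exists_le_add hfin ht hε
    exact ⟨n, hn⟩
  by_cases hex : ∃ a ∈ A, x ≤ a
  · obtain ⟨a, haA, hxa⟩ := hex
    exact ⟨a, haA, hx.trans (add_le_add_left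
      (measure_mono (inter_subset_inter_right _ (Iic_subset_Iic.2 hxa))) ε)⟩
  · push_neg at hex
    have hbdd : BddAbove A := ⟨x, fun a ha => (hex a ha).le⟩
    set s := sSup A with hs
    have hU2 : ⋃ n : ℕ, A ∩ Iic (s - 1 / (n + 1)) = A ∩ Iio s := by
      ext y; simp only [mem_iUnion, mem_inter_iff, mem_Iic, mem_Iio]
      constructor
      · rintro ⟨n, h1, h2⟩
        exact ⟨h1, lt_of_le_of_lt h2 (by nlinarith [one_div_pos.mpr (show (0:ℝ) < n+1 by positivity)])⟩
      · rintro ⟨h1, h2⟩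
        obtain ⟨n, hn⟩ := exists_nat_one_div_lt (sub_pos.mpr h2)
        exact ⟨n, h1, by linarith⟩
    have hmono2 : Monotone (fun n : ℕ => A ∩ Iic (s - 1 / (n + 1))) := by
      intro i j hij
      refine inter_subset_inter_right _ (Iic_subset_Iic.2 (by
        have h1 : (1:ℝ) / (j + 1) ≤ 1 / (i + 1) := by
          apply one_div_le_one_div_of_le (by positivity)
          exact_mod_cast by omega
        linarith))
    have ht2 := tendsto_measure_iUnion_atTop (μ := volume) hmono2
    rw [hU2] at ht2
    have hAs : volume A ≤ volume (A ∩ Iio s) := by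
      have hsub : A ⊆ (A ∩ Iio s) ∪ {s} := by
        intro a ha
        rcases lt_or_eq_of_le (le_csSup hbdd ha) with h | h
        · exact Or.inl ⟨ha, h⟩
        · exact Or.inr h
      calc volume A ≤ volume ((A ∩ Iio s) ∪ {s}) := measure_mono hsub
        _ ≤ volume (A ∩ Iio s) + volume ({s} : Set ℝ) := measure_union_le _ _
        _ = volume (A ∩ Iio s) := by simp
    have hfin2 : volume (A ∩ Iio s) ≠ ∞ :=
      (lt_of_le_of_lt (measure_mono inter_subset_left) hfin.lt_top).ne
    obtain ⟨n, hn⟩ := tendsto_exists_le_add hfin2 ht2 hε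
    obtain ⟨a, haA, hlt⟩ := exists_lt_of_lt_csSup hne
      (show s - 1 / (n + 1) < sSup A by nlinarith [one_div_pos.mpr (show (0:ℝ) < (n:ℝ)+1 by positivity)])
    refine ⟨a, haA, hAs.trans (hn.trans (add_le_add_left (measure_mono ?_) ε))⟩
    exact inter_subset_inter_right _ (Iic_subset_Iic.2 hlt.le)

private lemma cut_Ici (B : Set ℝ) (hne : B.Nonempty) (hfin : volume B ≠ ∞)
    {ε : ℝ≥0∞} (hε : ε ≠ 0) : ∃ b ∈ B, volume B ≤ volume (B ∩ Ici b) + ε := by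
  have hvol : ∀ s : Set ℝ, volume ((fun x : ℝ => -x) ⁻¹' s) = volume s := by
    intro s
    exact Measure.measure_preimage_neg volume s
  obtain ⟨b0, hb0⟩ := hne
  obtain ⟨a, ha, hcut⟩ := cut_Iic ((fun x : ℝ => -x) ⁻¹' B) ⟨-b0, by simp [hb0]⟩
    (by rw [hvol]; exact hfin) hε
  refine ⟨-a, ha, ?_⟩
  have hset : ((fun x : ℝ => -x) ⁻¹' B) ∩ Iic a = (fun x : ℝ => -x) ⁻¹' (B ∩ Ici (-a)) := by
    ext y; simp only [mem_inter_iff, mem_preimage, mem_Iic, mem_Ici]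
    constructor
    · rintro ⟨h1, h2⟩; exact ⟨h1, by linarith⟩
    · rintro ⟨h1, h2⟩; exact ⟨h1, by linarith⟩
  calc volume B = volume ((fun x : ℝ => -x) ⁻¹' B) := (hvol B).symm
    _ ≤ volume (((fun x : ℝ => -x) ⁻¹' B) ∩ Iic a) + ε := hcut
    _ = volume (B ∩ Ici (-a)) + ε := by rw [hset, hvol]

private lemma key_midpoint (A B M : Set ℝ) (hA : MeasurableSet A) (hB : MeasurableSet B)
    (hAne : A.Nonempty) (hBne : B.Nonempty)
    (hAfin : volume A ≠ ∞) (hBfin : volume B ≠ ∞)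
    (hmid : ∀ x ∈ A, ∀ y ∈ B, (x + y) / 2 ∈ M) :
    volume A + volume B ≤ 2 * volume M := by
  apply ENNReal.le_of_forall_pos_le_add
  intro ε hε _
  have hε2 : ((ε : ℝ≥0∞) / 2) ≠ 0 := by
    simp [ENNReal.div_eq_zero_iff, (by exact_mod_cast hε.ne' : (ε : ℝ≥0∞) ≠ 0)]
  obtain ⟨a, haA, hacut⟩ := cut_Iic A hAne hAfin hε2
  obtain ⟨b, hbB, hbcut⟩ := cut_Ici B hBne hBfin hε2
  set S1 : Set ℝ := (fun x : ℝ => 2 * x) ⁻¹' ((fun x : ℝ => x + -b) ⁻¹' (A ∩ Iic a)) with hS1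
  set S2 : Set ℝ := (fun x : ℝ => 2 * x) ⁻¹' ((fun x : ℝ => x + -a) ⁻¹' (B ∩ Ici b)) with hS2
  have hS1m : MeasurableSet S1 :=
    ((hA.inter measurableSet_Iic).preimage (measurable_id.add_const (-b))).preimage
      (measurable_const_mul 2)
  have hS2m : MeasurableSet S2 :=
    ((hB.inter measurableSet_Ici).preimage (measurable_id.add_const (-a))).preimage
      (measurable_const_mul 2)
  have hvol1 : volume S1 = ENNReal.ofReal 2⁻¹ * volume (A ∩ Iic a) := by
    rw [hS1, Real.volume_preimage_mul_left (two_ne_zero), measure_preimage_add_right,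
      abs_of_pos (by norm_num : (0:ℝ) < 2⁻¹)]
  have hvol2 : volume S2 = ENNReal.ofReal 2⁻¹ * volume (B ∩ Ici b) := by
    rw [hS2, Real.volume_preimage_mul_left (two_ne_zero), measure_preimage_add_right,
      abs_of_pos (by norm_num : (0:ℝ) < 2⁻¹)]
  have hS1M : S1 ⊆ M := by
    rintro x ⟨hx1, _⟩
    have h := hmid _ hx1 b hbB
    have he : (2 * x + -b + b) / 2 = x := by ring
    rwa [he] at h
  have hS2M : S2 ⊆ M := by
    rintro x ⟨hx1, _⟩
    have h := hmid a haA _ hx1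
    have he : (a + (2 * x + -a)) / 2 = x := by ring
    rwa [he] at h
  have hS1le : S1 ⊆ Iic ((a + b) / 2) := by
    rintro x ⟨_, hx2⟩
    simp only [mem_preimage, mem_Iic] at hx2 ⊢
    linarith [hx2]
  have hS2ge : S2 ⊆ Ici ((a + b) / 2) := by
    rintro x ⟨_, hx2⟩
    simp only [mem_preimage, mem_Ici] at hx2 ⊢
    linarith [hx2]
  have hinter : volume (S1 ∩ S2) = 0 := by
    have : S1 ∩ S2 ⊆ {(a + b) / 2} := by
      intro x ⟨h1, h2⟩
      exact le_antisymm (hS1le h1) (hS2ge h2)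
    exact le_antisymm ((measure_mono this).trans (by simp)) zero_le
  have hunion : volume S1 + volume S2 ≤ volume M := by
    have h1 : volume (S1 ∪ S2) + volume (S1 ∩ S2) = volume S1 + volume S2 :=
      measure_union_add_inter S1 hS2m
    rw [← h1, hinter, add_zero]
    exact measure_mono (union_subset hS1M hS2M)
  have h2 : (2 : ℝ≥0∞) * ENNReal.ofReal 2⁻¹ = 1 := by
    rw [ENNReal.ofReal_inv_of_pos two_pos]
    norm_num [ENNReal.mul_inv_cancel]
  calc volume A + volume B
      ≤ (volume (A ∩ Iic a) + ε / 2) + (volume (B ∩ Ici b) + ε / 2) := add_le_add hacut hbcut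
    _ = (volume (A ∩ Iic a) + volume (B ∩ Ici b)) + ε := by
        rw [add_add_add_comm, ENNReal.add_halves]
    _ = 2 * (volume S1 + volume S2) + ε := by
        rw [hvol1, hvol2, mul_add, ← mul_assoc, ← mul_assoc, h2, one_mul, one_mul]
    _ ≤ 2 * volume M + ε := add_le_add_left (mul_le_mul_right hunion 2) ε

private lemma sqrt_amgm {x y : ℝ} (hx : 0 ≤ x) (hy : 0 ≤ y) :
    Real.sqrt (x * y) ≤ (x + y) / 2 := by
  nlinarith [sq_nonneg (Real.sqrt x - Real.sqrt y), Real.sq_sqrt hx, Real.sq_sqrt hy,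
    Real.sqrt_nonneg x, Real.sqrt_nonneg y, Real.sqrt_mul_self hx,
    Real.sqrt_mul hx y]

private lemma scale_lintegral (v : ℝ → ℝ≥0∞) (hv : Measurable v) {c : ℝ} (hc : 0 < c) :
    ∫⁻ t in Ioi (0:ℝ), v (c * t) = ENNReal.ofReal c⁻¹ * ∫⁻ t in Ioi (0:ℝ), v t := by
  have h1 := setLIntegral_map (μ := volume) (s := Ioi (0:ℝ)) measurableSet_Ioi hv (measurable_const_mul c)
  have hpre : (fun x : ℝ => c * x) ⁻¹' Ioi 0 = Ioi 0 := by
    ext x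
    simp only [mem_preimage, mem_Ioi]
    constructor
    · intro h; nlinarith
    · intro h; positivity
  rw [Real.map_volume_mul_left hc.ne', Measure.restrict_smul, lintegral_smul_measure, hpre] at h1
  rw [← h1, abs_of_pos (inv_pos.mpr hc), smul_eq_mul]

private lemma level_facts (f : ℝ → ℝ) (hf0 : ∀ x, 0 ≤ f x) (hfi : Integrable f)
    (C : ℝ) (hfC : ∀ x, f x ≤ C) (hI : ∫ x, f x ≠ 0) :
    ∃ K : ℝ, 0 < K ∧
      (∀ c : ℝ, 0 < c → c < K → ∃ A : Set ℝ, MeasurableSet A ∧ A.Nonempty ∧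
        volume A ≠ ∞ ∧ A ⊆ {x | c < f x} ∧ volume A = volume {x | c < f x}) ∧
      (∀ c : ℝ, K < c → volume {x | c < f x} = 0) := by
  have hmk := hfi.aemeasurable
  set f₁ := hmk.mk f with hf₁def
  have hf₁m : Measurable f₁ := hmk.measurable_mk
  have hfeq : f =ᵐ[volume] f₁ := hmk.ae_eq_mk
  have hN0 : volume {x | ¬ f x = f₁ x} = 0 := by
    rw [← ae_iff]; exact hfeq
  obtain ⟨N, hNs, hNm, hN⟩ := exists_measurable_superset_of_null hN0
  set F := fun x => ENNReal.ofReal (f₁ x) with hFdef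
  have hFm : Measurable F := ENNReal.measurable_ofReal.comp hf₁m
  set Mf := essSup F volume with hMdef
  have hMtop : Mf ≠ ∞ := by
    have hle : ∀ᵐ x ∂volume, F x ≤ ENNReal.ofReal C := by
      filter_upwards [hfeq] with x hx
      exact ENNReal.ofReal_le_ofReal (hx ▸ hfC x)
    exact ((essSup_le_of_ae_le _ hle).trans_lt ENNReal.ofReal_lt_top).ne
  have hM0 : Mf ≠ 0 := by
    intro h
    apply hI
    have hae : f =ᵐ[volume] 0 := by
      filter_upwards [ae_le_essSup F, hfeq] with x h1 h2
      rw [← hMdef, h] at h1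
      have h3 : f₁ x ≤ 0 := by
        by_contra hcon
        push_neg at hcon
        simp only [hFdef, nonpos_iff_eq_zero, ENNReal.ofReal_eq_zero] at h1
        linarith
      have := hf0 x
      simp only [Pi.zero_apply]
      linarith [h2 ▸ h3]
    rw [integral_congr_ae hae]
    simp
  set K := Mf.toReal with hKdef
  have hK : 0 < K := ENNReal.toReal_pos hM0 hMtop
  have hMK : Mf = ENNReal.ofReal K := (ENNReal.ofReal_toReal hMtop).symm
  have hLf : ∫⁻ x, F x ∂volume ≠ ∞ := by
    have h1 : ∫⁻ x, F x ∂volume = ∫⁻ x, (‖f x‖₊ : ℝ≥0∞) ∂volume := by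
      apply lintegral_congr_ae
      filter_upwards [hfeq] with x hx
      show ENNReal.ofReal (f₁ x) = (‖f x‖₊ : ℝ≥0∞)
      rw [← hx, ← Real.enorm_eq_ofReal (hf0 x)]; rfl
    rw [h1]
    exact hfi.hasFiniteIntegral.ne
  refine ⟨K, hK, ?_, ?_⟩
  · intro c hc0 hcK
    have hveq1 : volume ({x | c < f₁ x} \ N) = volume {x | c < f₁ x} := measure_diff_null hN
    have hveq2 : volume {x | c < f₁ x} = volume {x | c < f x} := by
      apply measure_congr
      filter_upwards [hfeq] with x hx
      change (c < f₁ x) = (c < f x)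
      rw [hx]
    refine ⟨{x | c < f₁ x} \ N, (measurableSet_lt measurable_const hf₁m).diff hNm, ?_, ?_, ?_, ?_⟩
    · apply nonempty_of_measure_ne_zero
      rw [hveq1]
      intro h0
      have hae : ∀ᵐ x ∂volume, f₁ x ≤ c := by
        rw [ae_iff]
        simpa only [not_le] using h0
      have : Mf ≤ ENNReal.ofReal c :=
        essSup_le_of_ae_le _ (hae.mono fun x hx => ENNReal.ofReal_le_ofReal hx)
      rw [hMK] at this
      exact absurd this (not_le.mpr ((ENNReal.ofReal_lt_ofReal_iff hK).mpr hcK))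
    · have hmarkov := meas_ge_le_lintegral_div (μ := volume) hFm.aemeasurable
        (ε := ENNReal.ofReal c) (by simp [ENNReal.ofReal_eq_zero, not_le, hc0])
        ENNReal.ofReal_ne_top
      have hsub2 : {x | c < f₁ x} ⊆ {x | ENNReal.ofReal c ≤ F x} :=
        fun x hx => ENNReal.ofReal_le_ofReal (le_of_lt hx)
      have hfin : volume {x | c < f₁ x} ≠ ∞ := by
        refine ((measure_mono hsub2).trans hmarkov).trans_lt ?_ |>.ne
        exact ENNReal.div_lt_top hLf (by simp [ENNReal.ofReal_eq_zero, not_le, hc0])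
      rw [← hveq1] at hfin
      exact hfin
    · rintro x ⟨hx1, hx2⟩
      have : f x = f₁ x := by
        by_contra hne
        exact hx2 (hNs hne)
      simp only [mem_setOf_eq, this]
      exact hx1
    · rw [hveq1, hveq2]
  · intro c hKc
    have hae : ∀ᵐ x ∂volume, f x ≤ c := by
      filter_upwards [ae_le_essSup F, hfeq] with x h1 h2
      rw [← hMdef, hMK] at h1
      have h3 : f₁ x ≤ K := (ENNReal.ofReal_le_ofReal_iff hK.le).mp h1
      rw [h2]
      linarith
    have h2 := ae_iff.mp hae
    simpa only [not_le] using h2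

private lemma PL_bounded
    (m f g : ℝ → ℝ)
    (hm0 : ∀ x, 0 ≤ m x) (hf0 : ∀ x, 0 ≤ f x) (hg0 : ∀ x, 0 ≤ g x)
    (hmi : Integrable m) (hfi : Integrable f) (hgi : Integrable g)
    (hcond : ∀ r s : ℝ, Real.sqrt (f r * g s) ≤ m ((r + s) / 2))
    (C : ℝ) (hfC : ∀ x, f x ≤ C) (hgC : ∀ x, g x ≤ C) :
    Real.sqrt ((∫ x, f x) * (∫ x, g x)) ≤ ∫ x, m x := by
  by_cases hIf : ∫ x, f x = 0
  · rw [hIf, zero_mul, Real.sqrt_zero]; exact integral_nonneg hm0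
  by_cases hIg : ∫ x, g x = 0
  · rw [hIg, mul_zero, Real.sqrt_zero]; exact integral_nonneg hm0
  obtain ⟨Kf, hKf, hAf, hBf⟩ := level_facts f hf0 hfi C hfC hIf
  obtain ⟨Kg, hKg, hAg, hBg⟩ := level_facts g hg0 hgi C hgC hIg
  set a := Real.sqrt (Kf / Kg) with hadef
  have ha : 0 < a := Real.sqrt_pos.mpr (div_pos hKf hKg)
  set S := Real.sqrt (Kf * Kg) with hSdef
  have hS : 0 < S := Real.sqrt_pos.mpr (mul_pos hKf hKg)
  have haS : a * S = Kf := by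
    rw [hadef, hSdef, ← Real.sqrt_mul (div_pos hKf hKg).le,
      show Kf / Kg * (Kf * Kg) = Kf ^ 2 by field_simp]
    exact Real.sqrt_sq hKf.le
  have hSa : S / a = Kg := by
    have h1 : a ^ 2 = Kf / Kg := Real.sq_sqrt (div_pos hKf hKg).le
    have h2 : a ^ 2 * Kg = Kf := by rw [h1]; field_simp
    rw [div_eq_iff ha.ne']
    nlinarith [haS, h2, ha]
  set vf : ℝ → ℝ≥0∞ := fun c => volume {x | c < f x} with hvfdef
  set vg : ℝ → ℝ≥0∞ := fun c => volume {x | c < g x} with hvgdef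
  set vm : ℝ → ℝ≥0∞ := fun c => volume {x | c < m x} with hvmdef
  have hvfm : Measurable vf := Antitone.measurable
    (fun c d hcd => measure_mono fun x hx => lt_of_le_of_lt hcd hx)
  have hvgm : Measurable vg := Antitone.measurable
    (fun c d hcd => measure_mono fun x hx => lt_of_le_of_lt hcd hx)
  have hvmm : Measurable vm := Antitone.measurable
    (fun c d hcd => measure_mono fun x hx => lt_of_le_of_lt hcd hx)
  have hLf : ∫⁻ x, ENNReal.ofReal (f x) = ∫⁻ t in Ioi (0:ℝ), vf t :=
    lintegral_eq_lintegral_meas_lt volume (ae_of_all _ hf0) hfi.aemeasurable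
  have hLg : ∫⁻ x, ENNReal.ofReal (g x) = ∫⁻ t in Ioi (0:ℝ), vg t :=
    lintegral_eq_lintegral_meas_lt volume (ae_of_all _ hg0) hgi.aemeasurable
  have hLm : ∫⁻ x, ENNReal.ofReal (m x) = ∫⁻ t in Ioi (0:ℝ), vm t :=
    lintegral_eq_lintegral_meas_lt volume (ae_of_all _ hm0) hmi.aemeasurable
  have hcore : ∀ t ∈ Ioo (0:ℝ) S, vf (a * t) + vg (t / a) ≤ 2 * vm t := by
    rintro t ⟨ht0, htS⟩
    have hat : 0 < a * t := mul_pos ha ht0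
    have hta : 0 < t / a := div_pos ht0 ha
    have hatK : a * t < Kf := by nlinarith
    have htaK : t / a < Kg := by
      rw [← hSa]
      gcongr
    obtain ⟨A, hAm, hAne, hAfin, hAsub, hAvol⟩ := hAf (a * t) hat hatK
    obtain ⟨B, hBm, hBne, hBfin, hBsub, hBvol⟩ := hAg (t / a) hta htaK
    have hmid : ∀ x ∈ A, ∀ y ∈ B, (x + y) / 2 ∈ {z : ℝ | t < m z} := by
      intro x hx y hy
      have hfx : a * t < f x := hAsub hx
      have hgy : t / a < g y := hBsub hy
      have h1 : t ^ 2 < f x * g y := by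
        have he : (a * t) * (t / a) = t ^ 2 := by field_simp
        calc t ^ 2 = (a * t) * (t / a) := he.symm
          _ < f x * g y := mul_lt_mul'' hfx hgy hat.le hta.le
      have h2 : t < Real.sqrt (f x * g y) := (Real.lt_sqrt ht0.le).mpr h1
      exact lt_of_lt_of_le h2 (hcond x y)
    have hkey := key_midpoint A B _ hAm hBm hAne hBne hAfin hBfin hmid
    calc vf (a * t) + vg (t / a) = volume A + volume B := by
          simp only [hvfdef, hvgdef]; rw [← hAvol, ← hBvol]
      _ ≤ 2 * vm t := hkey
  have hvanf : ∀ t : ℝ, S < t → vf (a * t) = 0 := by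
    intro t ht
    exact hBf (a * t) (by nlinarith)
  have hvang : ∀ t : ℝ, S < t → vg (t / a) = 0 := by
    intro t ht
    apply hBg (t / a)
    rw [← hSa]
    gcongr
  have hsplit : ∀ v : ℝ → ℝ≥0∞, (∀ t : ℝ, S < t → v t = 0) →
      ∫⁻ t in Ioi (0:ℝ), v t = ∫⁻ t in Ioo (0:ℝ) S, v t := by
    intro v hv
    have hd : Ioi (0:ℝ) = Ioo 0 S ∪ Ici S := by
      ext x
      simp only [mem_Ioi, mem_union, mem_Ioo, mem_Ici]
      constructor
      · intro hx
        rcases lt_or_ge x S with h | h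
        exacts [Or.inl ⟨hx, h⟩, Or.inr h]
      · rintro (⟨h, _⟩ | h)
        exacts [h, lt_of_lt_of_le hS h]
    have hdisj : Disjoint (Ioo (0:ℝ) S) (Ici S) :=
      Set.disjoint_left.mpr fun x hx hx2 => absurd hx2 (not_le.mpr hx.2)
    rw [hd, lintegral_union measurableSet_Ici hdisj]
    have hz : ∫⁻ t in Ici S, v t = 0 := by
      rw [show volume.restrict (Ici S) = volume.restrict (Ioi S) from
        (Measure.restrict_congr_set Ioi_ae_eq_Ici).symm]
      rw [setLIntegral_congr_fun measurableSet_Ioi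
        (fun t (ht : t ∈ Ioi S) => hv t ht)]
      simp
    rw [hz, add_zero]
  have htrans_f : ∫⁻ t in Ioi (0:ℝ), vf (a * t) =
      ENNReal.ofReal a⁻¹ * ∫⁻ t in Ioi (0:ℝ), vf t := scale_lintegral vf hvfm ha
  have htrans_g : ∫⁻ t in Ioi (0:ℝ), vg (t / a) =
      ENNReal.ofReal a * ∫⁻ t in Ioi (0:ℝ), vg t := by
    simp_rw [div_eq_inv_mul]
    rw [scale_lintegral vg hvgm (inv_pos.mpr ha), inv_inv]
  have hmain : ENNReal.ofReal a⁻¹ * (∫⁻ x, ENNReal.ofReal (f x)) +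
      ENNReal.ofReal a * (∫⁻ x, ENNReal.ofReal (g x)) ≤ 2 * ∫⁻ x, ENNReal.ofReal (m x) := by
    calc ENNReal.ofReal a⁻¹ * (∫⁻ x, ENNReal.ofReal (f x)) +
        ENNReal.ofReal a * (∫⁻ x, ENNReal.ofReal (g x))
        = (∫⁻ t in Ioi (0:ℝ), vf (a * t)) + ∫⁻ t in Ioi (0:ℝ), vg (t / a) := by
          rw [htrans_f, htrans_g, hLf, hLg]
      _ = (∫⁻ t in Ioo (0:ℝ) S, vf (a * t)) + ∫⁻ t in Ioo (0:ℝ) S, vg (t / a) := by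
          rw [hsplit _ hvanf, hsplit _ hvang]
      _ = ∫⁻ t in Ioo (0:ℝ) S, (vf (a * t) + vg (t / a)) :=
          (lintegral_add_left (hvfm.comp (measurable_const_mul a)) _).symm
      _ ≤ ∫⁻ t in Ioo (0:ℝ) S, 2 * vm t :=
          setLIntegral_mono (hvmm.const_mul 2) hcore
      _ = 2 * ∫⁻ t in Ioo (0:ℝ) S, vm t := lintegral_const_mul 2 hvmm
      _ ≤ 2 * ∫⁻ t in Ioi (0:ℝ), vm t :=
          by gcongr 2 * ?_; exact lintegral_mono_set Ioo_subset_Ioi_self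
      _ = 2 * ∫⁻ x, ENNReal.ofReal (m x) := by rw [← hLm]
  have hfin : ∀ h : ℝ → ℝ, (∀ x, 0 ≤ h x) → Integrable h →
      ∫⁻ x, ENNReal.ofReal (h x) ≠ ∞ := by
    intro h hh0 hhi
    have h1 : ∫⁻ x, ENNReal.ofReal (h x) = ∫⁻ x, (‖h x‖₊ : ℝ≥0∞) :=
      lintegral_congr fun x => (Real.enorm_eq_ofReal (hh0 x)).symm
    rw [h1]
    exact hhi.hasFiniteIntegral.ne
  have hIfeq : ∫ x, f x = (∫⁻ x, ENNReal.ofReal (f x)).toReal :=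
    integral_eq_lintegral_of_nonneg_ae (ae_of_all _ hf0) hfi.aestronglyMeasurable
  have hIgeq : ∫ x, g x = (∫⁻ x, ENNReal.ofReal (g x)).toReal :=
    integral_eq_lintegral_of_nonneg_ae (ae_of_all _ hg0) hgi.aestronglyMeasurable
  have hImeq : ∫ x, m x = (∫⁻ x, ENNReal.ofReal (m x)).toReal :=
    integral_eq_lintegral_of_nonneg_ae (ae_of_all _ hm0) hmi.aestronglyMeasurable
  have hreal : a⁻¹ * (∫ x, f x) + a * (∫ x, g x) ≤ 2 * ∫ x, m x := by
    have h1 := ENNReal.toReal_mono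
      (by exact ENNReal.mul_ne_top (by simp) (hfin m hm0 hmi)) hmain
    rw [ENNReal.toReal_add (ENNReal.mul_ne_top ENNReal.ofReal_ne_top (hfin f hf0 hfi))
        (ENNReal.mul_ne_top ENNReal.ofReal_ne_top (hfin g hg0 hgi)),
      ENNReal.toReal_mul, ENNReal.toReal_mul, ENNReal.toReal_mul,
      ENNReal.toReal_ofReal (inv_nonneg.mpr ha.le), ENNReal.toReal_ofReal ha.le] at h1
    rw [hIfeq, hIgeq, hImeq]
    simpa using h1
  have hIf0 : 0 ≤ ∫ x, f x := integral_nonneg hf0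
  have hIg0 : 0 ≤ ∫ x, g x := integral_nonneg hg0
  have hxy : (∫ x, f x) * ∫ x, g x = (a⁻¹ * ∫ x, f x) * (a * ∫ x, g x) := by
    field_simp
  calc Real.sqrt ((∫ x, f x) * ∫ x, g x)
      = Real.sqrt ((a⁻¹ * ∫ x, f x) * (a * ∫ x, g x)) := by rw [hxy]
    _ ≤ ((a⁻¹ * ∫ x, f x) + a * (∫ x, g x)) / 2 :=
        sqrt_amgm (by positivity) (by positivity)
    _ ≤ ∫ x, m x := by linarith

theorem prekopa_leindler_1d
    (m f g : ℝ → ℝ)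
    (hm0 : ∀ x, 0 ≤ m x) (hf0 : ∀ x, 0 ≤ f x) (hg0 : ∀ x, 0 ≤ g x)
    (hmi : Integrable m) (hfi : Integrable f) (hgi : Integrable g)
    (hcond : ∀ r s : ℝ, Real.sqrt (f r * g s) ≤ m ((r + s) / 2)) :
    Real.sqrt ((∫ x, f x) * (∫ x, g x)) ≤ ∫ x, m x := by
  have hmin : ∀ (h : ℝ → ℝ), (∀ x, 0 ≤ h x) → Integrable h → ∀ n : ℕ,
      Integrable (fun x => min (h x) (n : ℝ)) := by
    intro h hh0 hhi n
    apply hhi.mono ((hhi.aemeasurable.min aemeasurable_const).aestronglyMeasurable)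
    apply ae_of_all
    intro x
    rw [Real.norm_eq_abs, Real.norm_eq_abs, abs_of_nonneg (le_min (hh0 x) (Nat.cast_nonneg n)),
      abs_of_nonneg (hh0 x)]
    exact min_le_left _ _
  have hbound : ∀ n : ℕ,
      Real.sqrt ((∫ x, min (f x) (n : ℝ)) * ∫ x, min (g x) (n : ℝ)) ≤ ∫ x, m x := by
    intro n
    refine PL_bounded m _ _ hm0 (fun x => le_min (hf0 x) (Nat.cast_nonneg n))
      (fun x => le_min (hg0 x) (Nat.cast_nonneg n)) hmi (hmin f hf0 hfi n) (hmin g hg0 hgi n)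
      ?_ n (fun x => min_le_right _ _) (fun x => min_le_right _ _)
    intro r s
    refine le_trans ?_ (hcond r s)
    apply Real.sqrt_le_sqrt
    exact mul_le_mul (min_le_left _ _) (min_le_left _ _)
      (le_min (hg0 s) (Nat.cast_nonneg n)) (hf0 r)
  have hlim : ∀ (h : ℝ → ℝ), (∀ x, 0 ≤ h x) → Integrable h →
      Filter.Tendsto (fun n : ℕ => ∫ x, min (h x) (n : ℝ)) Filter.atTop (nhds (∫ x, h x)) := by
    intro h hh0 hhi
    apply tendsto_integral_of_dominated_convergence h
      (fun n => (hhi.aemeasurable.min aemeasurable_const).aestronglyMeasurable) hhi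
    · intro n
      apply ae_of_all
      intro x
      rw [Real.norm_eq_abs, abs_of_nonneg (le_min (hh0 x) (Nat.cast_nonneg n))]
      exact min_le_left _ _
    · apply ae_of_all
      intro x
      obtain ⟨N, hN⟩ := exists_nat_ge (h x)
      apply Filter.Tendsto.congr' ?_ (tendsto_const_nhds : Filter.Tendsto (fun _ : ℕ => h x) _ _)
      rw [Filter.EventuallyEq, Filter.eventually_atTop]
      exact ⟨N, fun n hn => (min_eq_left (hN.trans (Nat.cast_le.mpr hn))).symm⟩
  have htend : Filter.Tendsto
      (fun n : ℕ => Real.sqrt ((∫ x, min (f x) (n : ℝ)) * ∫ x, min (g x) (n : ℝ)))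
      Filter.atTop (nhds (Real.sqrt ((∫ x, f x) * ∫ x, g x))) :=
    ((hlim f hf0 hfi).mul (hlim g hg0 hgi)).sqrt
  exact le_of_tendsto htend (Filter.Eventually.of_forall hbound)
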